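/- Let S be a compact subset of ℝ and let μ, ν be Borel probability measures on S, regarded as probability measures on ℝ, with cumulative distribution functions F_μ(x) = μ((−∞, x]) and F_ν(x) = ν((−∞, x]). Then the Monge–Kantorovich distance between μ and ν equals the L¹ distance of their cumulative distribution functions: d_MK(μ, ν) = ∫_ℝ |F_μ(x) − F_ν(x)| dx. -/

import Mathlib

open MeasureTheory

/-- The Monge–Kantorovich distance between two Borel (probability) measures on a metric
space `S`: the supremum of `∫ f dμ - ∫ f dν` over all `1`-Lipschitz functions `f : S → ℝ`. -/
noncomputable def dMK {S : Type*} [MetricSpace S] [MeasurableSpace S]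
    (μ ν : Measure S) : ℝ :=
  sSup {r : ℝ | ∃ f : S → ℝ, LipschitzWith 1 f ∧ r = ∫ x, f x ∂μ - ∫ x, f x ∂ν}

set_option linter.unusedSectionVars false
open Set

lemma aux_intervalIntegrable {g : ℝ → ℝ} (hm : Measurable g) {C : ℝ}
    (hb : ∀ t, |g t| ≤ C) (x y : ℝ) : IntervalIntegrable g volume x y := by
  constructor <;>
  · refine (integrable_const C).mono' (hm.aestronglyMeasurable.restrict) ?_
    · exact Filter.Eventually.of_forall fun t => by simpa using hb t

lemma aux_integrable_of_bdd_support {h : ℝ → ℝ} (hm : Measurable h) {C a b : ℝ}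
    (hb : ∀ t, |h t| ≤ C) (hsupp : ∀ t, t ∉ Set.Icc a b → h t = 0) :
    Integrable h volume := by
  have : h = (Set.Icc a b).indicator h := by
    funext t
    by_cases ht : t ∈ Set.Icc a b
    · simp [Set.indicator_of_mem ht]
    · simp [Set.indicator_of_notMem ht, hsupp t ht]
  rw [this]
  rw [integrable_indicator_iff measurableSet_Icc]
  refine (integrableOn_const (C := C) measure_Icc_lt_top.ne).mono' hm.aestronglyMeasurable.restrict ?_
  exact Filter.Eventually.of_forall fun t => by simpa using hb t

section CDF

variable {S : Set ℝ} (μ : Measure S) [IsProbabilityMeasure μ]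

noncomputable def cdfS (μ : Measure S) : ℝ → ℝ :=
  fun t => ((μ.map (Subtype.val : S → ℝ)) (Set.Iic t)).toReal

lemma cdfS_eq (t : ℝ) : cdfS μ t = (μ {s : S | (s : ℝ) ≤ t}).toReal := by
  rw [cdfS, Measure.map_apply measurable_subtype_coe measurableSet_Iic]
  rfl

lemma cdfS_mono : Monotone (cdfS μ) := by
  intro x y hxy
  rw [cdfS_eq, cdfS_eq]
  refine ENNReal.toReal_mono (measure_ne_top _ _) (measure_mono ?_)
  exact fun s hs => le_trans hs hxy

lemma cdfS_measurable : Measurable (cdfS μ) := (cdfS_mono μ).measurable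

lemma cdfS_nonneg (t : ℝ) : 0 ≤ cdfS μ t := ENNReal.toReal_nonneg

lemma cdfS_le_one (t : ℝ) : cdfS μ t ≤ 1 := by
  rw [cdfS_eq]
  exact ENNReal.toReal_le_of_le_ofReal one_pos.le (by simpa using prob_le_one)

lemma cdfS_eq_zero {t : ℝ} (ht : ∀ s : S, t < (s : ℝ)) : cdfS μ t = 0 := by
  rw [cdfS_eq]
  have : {s : S | (s : ℝ) ≤ t} = ∅ :=
    Set.eq_empty_of_forall_notMem fun s hs => absurd hs (not_le.2 (ht s))
  rw [this, measure_empty, ENNReal.toReal_zero]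

lemma cdfS_eq_one {t : ℝ} (ht : ∀ s : S, (s : ℝ) ≤ t) : cdfS μ t = 1 := by
  rw [cdfS_eq]
  have : {s : S | (s : ℝ) ≤ t} = Set.univ := Set.eq_univ_of_forall ht
  rw [this, measure_univ, ENNReal.toReal_one]

lemma meas_lt_toReal (t : ℝ) : (μ {s : S | t < (s : ℝ)}).toReal = 1 - cdfS μ t := by
  have hc : {s : S | t < (s : ℝ)} = {s : S | (s : ℝ) ≤ t}ᶜ := by
    ext s; simp [not_le]
  have hms : MeasurableSet {s : S | (s : ℝ) ≤ t} :=
    measurable_subtype_coe measurableSet_Iic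
  rw [hc, measure_compl hms (measure_ne_top _ _), measure_univ, cdfS_eq,
    ENNReal.toReal_sub_of_le prob_le_one ENNReal.one_ne_top, ENNReal.toReal_one]

end CDF

lemma aux_integrableOn {g : ℝ → ℝ} (hm : Measurable g) {C : ℝ}
    (hb : ∀ t, |g t| ≤ C) {s : Set ℝ} (hs : volume s < ⊤) :
    IntegrableOn g s volume := by
  refine (integrableOn_const (C := C) hs.ne).mono' hm.aestronglyMeasurable.restrict ?_
  exact Filter.Eventually.of_forall fun t => by simpa using hb t

lemma fubini_key {S : Set ℝ} {a b : ℝ}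
    (hab : ∀ s : S, a ≤ (s : ℝ) ∧ (s : ℝ) ≤ b) (hab' : a ≤ b)
    (μ : Measure S) [IsProbabilityMeasure μ]
    {g : ℝ → ℝ} (hgm : Measurable g) (hg1 : ∀ t, |g t| ≤ 1) :
    ∫ s : S, (∫ t in a..(s : ℝ), g t) ∂μ
      = ∫ t, Set.indicator (Set.Ici a)
          (fun t => g t * (μ {s : S | t < (s : ℝ)}).toReal) t := by
  set k : S → ℝ → ℝ := fun s t => Set.indicator (Set.Ico a (s : ℝ)) g t with hk
  -- Step 1: rewrite the interval integral as an integral of an indicator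
  have step1 : ∀ s : S, (∫ t in a..(s : ℝ), g t) = ∫ t, k s t := by
    intro s
    rw [intervalIntegral.integral_of_le (hab s).1, MeasureTheory.integral_Ioc_eq_integral_Ioo,
      ← MeasureTheory.integral_Ico_eq_integral_Ioo, hk]
    rw [integral_indicator measurableSet_Ico]
  -- measurability of the uncurried function
  have hE : MeasurableSet {p : S × ℝ | a ≤ p.2 ∧ p.2 < (p.1 : ℝ)} := by
    refine MeasurableSet.inter ?_ ?_
    · exact measurable_snd measurableSet_Ici
    · exact measurableSet_lt measurable_snd (measurable_subtype_coe.comp measurable_fst)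
  have huk : Function.uncurry k =
      Set.indicator {p : S × ℝ | a ≤ p.2 ∧ p.2 < (p.1 : ℝ)} (fun p => g p.2) := by
    funext p
    simp only [Function.uncurry, hk, Set.indicator_apply, Set.mem_Ico, Set.mem_setOf_eq]
  have hukm : Measurable (Function.uncurry k) := by
    rw [huk]; exact (hgm.comp measurable_snd).indicator hE
  -- integrability of each slice
  have hslice : ∀ s : S, Integrable (k s) volume := by
    intro s
    rw [hk]
    simp only
    rw [integrable_indicator_iff measurableSet_Ico]
    exact aux_integrableOn hgm hg1 measure_Ico_lt_top
  -- integrability of the uncurried function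
  have hint : Integrable (Function.uncurry k) (μ.prod volume) := by
    rw [MeasureTheory.integrable_prod_iff hukm.aestronglyMeasurable]
    constructor
    · exact Filter.Eventually.of_forall fun s => hslice s
    · refine (integrable_const (b - a)).mono'
        (hukm.norm.aestronglyMeasurable.integral_prod_right') ?_
      refine Filter.Eventually.of_forall fun s => ?_
      have h1 : ∀ t, ‖k s t‖ ≤ Set.indicator (Set.Icc a b) (fun _ => (1 : ℝ)) t := by
        intro t
        by_cases ht : t ∈ Set.Ico a (s : ℝ)
        · have htmem : t ∈ Set.Icc a b :=
            ⟨ht.1, le_trans ht.2.le (hab s).2⟩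
          simp only [hk, Set.indicator_of_mem ht, Set.indicator_of_mem htmem]
          simpa using hg1 t
        · simp only [hk, Set.indicator_of_notMem ht, norm_zero]
          exact Set.indicator_nonneg (fun _ _ => zero_le_one) t
      have h2 : (∫ t, ‖k s t‖) ≤ ∫ t, Set.indicator (Set.Icc a b) (fun _ => (1 : ℝ)) t := by
        refine integral_mono (hslice s).norm ?_ h1
        rw [integrable_indicator_iff measurableSet_Icc]
        exact integrableOn_const (C := (1:ℝ)) measure_Icc_lt_top.ne
      have h3 : (∫ t, Set.indicator (Set.Icc a b) (fun _ => (1 : ℝ)) t) = b - a := by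
        rw [integral_indicator measurableSet_Icc, setIntegral_const, Real.volume_real_Icc_of_le hab',
          smul_eq_mul, mul_one]
      have h4 : (0 : ℝ) ≤ ∫ t, ‖k s t‖ := integral_nonneg fun t => norm_nonneg _
      show ‖∫ t, ‖k s t‖‖ ≤ b - a
      rw [Real.norm_eq_abs, abs_of_nonneg h4]
      linarith
  -- Fubini
  have swap : ∫ s : S, (∫ t, k s t) ∂μ = ∫ t, (∫ s : S, k s t ∂μ) := by
    exact MeasureTheory.integral_integral_swap hint
  -- compute the inner integral
  have inner : ∀ t : ℝ, (∫ s : S, k s t ∂μ)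
      = Set.indicator (Set.Ici a) (fun t => g t * (μ {s : S | t < (s : ℝ)}).toReal) t := by
    intro t
    by_cases hat : a ≤ t
    · have hset : (fun s : S => k s t) =
          Set.indicator {s : S | t < (s : ℝ)} (fun _ => g t) := by
        funext s
        simp only [hk, Set.indicator_apply, Set.mem_Ico, Set.mem_setOf_eq]
        by_cases h : t < (s : ℝ)
        · simp [h, hat]
        · simp [h]
      rw [hset, integral_indicator_const _
          (measurableSet_lt measurable_const measurable_subtype_coe),
        Set.indicator_of_mem (Set.mem_Ici.2 hat), smul_eq_mul, mul_comm]
      rfl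
    · have hset : (fun s : S => k s t) = fun _ => (0 : ℝ) := by
        funext s
        simp only [hk, Set.indicator_apply, Set.mem_Ico]
        simp [hat]
      rw [hset, integral_const, smul_zero, Set.indicator_of_notMem (by simpa using hat)]
  calc ∫ s : S, (∫ t in a..(s : ℝ), g t) ∂μ
      = ∫ s : S, (∫ t, k s t) ∂μ := by
        exact integral_congr_ae (Filter.Eventually.of_forall fun s => step1 s)
    _ = ∫ t, (∫ s : S, k s t ∂μ) := swap
    _ = ∫ t, Set.indicator (Set.Ici a)
          (fun t => g t * (μ {s : S | t < (s : ℝ)}).toReal) t := by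
        exact integral_congr_ae (Filter.Eventually.of_forall fun t => inner t)

lemma indicator_integrable {S : Set ℝ} {a b : ℝ}
    (hab : ∀ s : S, a ≤ (s : ℝ) ∧ (s : ℝ) ≤ b)
    (μ : Measure S) [IsProbabilityMeasure μ]
    {g : ℝ → ℝ} (hgm : Measurable g) (hg1 : ∀ t, |g t| ≤ 1) :
    Integrable (Set.indicator (Set.Ici a)
      (fun t => g t * (μ {s : S | t < (s : ℝ)}).toReal)) volume := by
  have hmeas : Measurable fun t => g t * (μ {s : S | t < (s : ℝ)}).toReal := by
    have h2 : Measurable fun t => (μ {s : S | t < (s : ℝ)}).toReal := by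
      simp only [meas_lt_toReal μ]
      exact measurable_const.sub (cdfS_measurable μ)
    exact hgm.mul h2
  refine aux_integrable_of_bdd_support (hmeas.indicator measurableSet_Ici)
    (C := 1) (a := a) (b := b) ?_ ?_
  · intro t
    by_cases hta : t ∈ Set.Ici a
    swap
    · rw [Set.indicator_of_notMem hta, abs_zero]; exact zero_le_one
    rw [Set.indicator_of_mem hta, abs_mul]
    calc |g t| * |(μ {s : S | t < (s : ℝ)}).toReal| ≤ 1 * 1 := by
          refine mul_le_mul (hg1 t) ?_ (abs_nonneg _) zero_le_one
          rw [abs_of_nonneg ENNReal.toReal_nonneg]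
          exact ENNReal.toReal_le_of_le_ofReal one_pos.le (by simpa using prob_le_one)
      _ = 1 := one_mul 1
  · intro t ht
    rcases not_and_or.1 ht with h | h
    · exact Set.indicator_of_notMem (by simpa using h) _
    · push_neg at h
      have : {s : S | t < (s : ℝ)} = ∅ :=
        Set.eq_empty_of_forall_notMem fun s hs =>
          absurd hs (not_lt.2 (le_trans (hab s).2 h.le))
      by_cases hta : t ∈ Set.Ici a
      · rw [Set.indicator_of_mem hta, this, measure_empty, ENNReal.toReal_zero, mul_zero]
      · exact Set.indicator_of_notMem hta _

lemma diff_key {S : Set ℝ} {a b : ℝ}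
    (hab : ∀ s : S, a ≤ (s : ℝ) ∧ (s : ℝ) ≤ b) (hab' : a ≤ b)
    (μ ν : Measure S) [IsProbabilityMeasure μ] [IsProbabilityMeasure ν]
    {g : ℝ → ℝ} (hgm : Measurable g) (hg1 : ∀ t, |g t| ≤ 1) :
    (∫ s : S, (∫ t in a..(s : ℝ), g t) ∂μ) - (∫ s : S, (∫ t in a..(s : ℝ), g t) ∂ν)
      = ∫ t, g t * (cdfS ν t - cdfS μ t) := by
  rw [fubini_key hab hab' μ hgm hg1, fubini_key hab hab' ν hgm hg1,
    ← integral_sub (indicator_integrable hab μ hgm hg1) (indicator_integrable hab ν hgm hg1)]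
  refine integral_congr_ae (Filter.Eventually.of_forall fun t => ?_)
  dsimp only
  by_cases hta : t ∈ Set.Ici a
  · rw [Set.indicator_of_mem hta, Set.indicator_of_mem hta,
      meas_lt_toReal μ t, meas_lt_toReal ν t]
    ring
  · rw [Set.indicator_of_notMem hta, Set.indicator_of_notMem hta]
    have hlt : ∀ s : S, t < (s : ℝ) := fun s =>
      lt_of_lt_of_le (not_le.1 (by simpa using hta)) (hab s).1
    rw [cdfS_eq_zero μ hlt, cdfS_eq_zero ν hlt]
    simp

lemma lip_integral {g : ℝ → ℝ} (hgm : Measurable g) (hg1 : ∀ t, |g t| ≤ 1) (a : ℝ) :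
    LipschitzWith 1 (fun x => ∫ t in a..x, g t) := by
  refine LipschitzWith.of_dist_le_mul fun x y => ?_
  have hi : ∀ u v : ℝ, IntervalIntegrable g volume u v := fun u v =>
    aux_intervalIntegrable hgm hg1 u v
  have hsub : (∫ t in a..x, g t) - (∫ t in a..y, g t) = ∫ t in y..x, g t :=
    intervalIntegral.integral_interval_sub_left (hi a x) (hi a y)
  rw [Real.dist_eq, hsub]
  have := intervalIntegral.norm_integral_le_of_norm_le_const (C := 1) (f := g)
    (a := y) (b := x) (fun t _ => by simpa using hg1 t)
  rw [Real.norm_eq_abs] at this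
  calc |∫ t in y..x, g t| ≤ 1 * |x - y| := this
    _ = (1 : NNReal) * dist x y := by rw [Real.dist_eq]; norm_num

lemma integrable_compact {S : Set ℝ} (hS : IsCompact S) (μ : Measure S)
    [IsProbabilityMeasure μ] {f : S → ℝ} (hf : Continuous f) :
    Integrable f μ := by
  haveI : CompactSpace S := isCompact_iff_compactSpace.mp hS
  obtain ⟨C, hC⟩ : ∃ C : ℝ, ∀ x : S, ‖f x‖ ≤ C := by
    rcases (Metric.isBounded_iff_subset_closedBall 0).1 (isCompact_range hf).isBounded
      with ⟨C, hC⟩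
    exact ⟨C, fun x => by simpa [Metric.mem_closedBall] using hC ⟨x, rfl⟩⟩
  exact (integrable_const C).mono' hf.aestronglyMeasurable
    (Filter.Eventually.of_forall hC)

lemma phi_close {f : ℝ → ℝ} (hf : LipschitzWith 1 f) {h : ℝ} (hh : 0 < h) (a x : ℝ) :
    |(∫ t in a..x, (f (t + h) - f t) / h) - (f x - f a)| ≤ 2 * h := by
  have hfc : Continuous f := hf.continuous
  have hc1 : Continuous fun t => f (t + h) := hfc.comp (continuous_add_right h)
  have i1 : ∀ u v : ℝ, IntervalIntegrable (fun t => f (t + h)) volume u v := fun u v =>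
    hc1.intervalIntegrable u v
  have i2 : ∀ u v : ℝ, IntervalIntegrable f volume u v := fun u v => hfc.intervalIntegrable u v
  have e1 : (∫ t in a..x, (f (t + h) - f t) / h)
      = ((∫ t in a..x, f (t + h)) - ∫ t in a..x, f t) / h := by
    rw [intervalIntegral.integral_div, intervalIntegral.integral_sub (i1 a x) (i2 a x)]
  have e2 : (∫ t in a..x, f (t + h)) = ∫ t in (a + h)..(x + h), f t :=
    intervalIntegral.integral_comp_add_right f h
  have e3 : (∫ t in (a + h)..(x + h), f t)
      = (∫ t in (a + h)..x, f t) + ∫ t in x..(x + h), f t :=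
    (intervalIntegral.integral_add_adjacent_intervals (i2 _ _) (i2 _ _)).symm
  have e4 : (∫ t in a..x, f t) = (∫ t in a..(a + h), f t) + ∫ t in (a + h)..x, f t :=
    (intervalIntegral.integral_add_adjacent_intervals (i2 _ _) (i2 _ _)).symm
  have lipbd : ∀ y u : ℝ, u ∈ Set.uIoc y (y + h) → ‖f u - f y‖ ≤ h := by
    intro y u hu
    rw [Set.uIoc_of_le (by linarith)] at hu
    have hd : |f u - f y| ≤ 1 * |u - y| := by
      have := hf.dist_le_mul u y
      simpa [Real.dist_eq] using this
    have : |u - y| ≤ h := by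
      rw [abs_of_nonneg (by linarith [hu.1.le])]
      linarith [hu.2]
    rw [Real.norm_eq_abs]
    linarith
  have bd : ∀ y : ℝ, |(∫ t in y..(y + h), f t) - h * f y| ≤ h * h := by
    intro y
    have ec : (∫ t in y..(y + h), (f y : ℝ)) = h * f y := by
      rw [intervalIntegral.integral_const, smul_eq_mul]; ring_nf
    have : (∫ t in y..(y + h), f t) - h * f y = ∫ t in y..(y + h), (f t - f y) := by
      rw [intervalIntegral.integral_sub (i2 _ _) (intervalIntegrable_const), ec]
    rw [this]
    have := intervalIntegral.norm_integral_le_of_norm_le_const (C := h)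
      (f := fun t => f t - f y) (a := y) (b := y + h) (fun u hu => lipbd y u hu)
    rw [Real.norm_eq_abs] at this
    calc |∫ t in y..(y + h), (f t - f y)| ≤ h * |y + h - y| := this
      _ = h * h := by rw [abs_of_nonneg (by linarith : (0:ℝ) ≤ y + h - y)]; ring
  have num : (∫ t in a..x, f (t + h)) - (∫ t in a..x, f t)
      = ((∫ t in x..(x + h), f t) - h * f x) - ((∫ t in a..(a + h), f t) - h * f a)
        + h * (f x - f a) := by
    rw [e2, e3, e4]; ring
  rw [e1, num]
  have hb1 := bd x
  have hb2 := bd a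
  set A := (∫ t in x..(x + h), f t) - h * f x with hA
  set B := (∫ t in a..(a + h), f t) - h * f a with hB
  have hred : (A - B + h * (f x - f a)) / h - (f x - f a) = (A - B) / h := by
    field_simp
    ring
  rw [hred, abs_div, abs_of_pos hh, div_le_iff₀ hh]
  have : |A - B| ≤ |A| + |B| := abs_sub A B
  nlinarith [abs_nonneg (A - B)]

lemma cdf_diff_zero {S : Set ℝ} {a b : ℝ}
    (hab : ∀ s : S, a ≤ (s : ℝ) ∧ (s : ℝ) ≤ b)
    (μ ν : Measure S) [IsProbabilityMeasure μ] [IsProbabilityMeasure ν]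
    {t : ℝ} (ht : t ∉ Set.Icc a b) : cdfS μ t - cdfS ν t = 0 := by
  rcases not_and_or.1 ht with h | h
  · have hlt : ∀ s : S, t < (s : ℝ) := fun s =>
      lt_of_lt_of_le (not_le.1 h) (hab s).1
    rw [cdfS_eq_zero μ hlt, cdfS_eq_zero ν hlt, sub_zero]
  · have hle : ∀ s : S, (s : ℝ) ≤ t := fun s =>
      le_trans (hab s).2 (not_le.1 h).le
    rw [cdfS_eq_one μ hle, cdfS_eq_one ν hle, sub_self]

lemma cdf_diff_abs_le {S : Set ℝ} (μ ν : Measure S)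
    [IsProbabilityMeasure μ] [IsProbabilityMeasure ν] (t : ℝ) :
    |cdfS μ t - cdfS ν t| ≤ 2 := by
  have h1 := cdfS_nonneg μ t; have h2 := cdfS_le_one μ t
  have h3 := cdfS_nonneg ν t; have h4 := cdfS_le_one ν t
  rw [abs_le]; constructor <;> linarith

lemma int_g_cdf {S : Set ℝ} {a b : ℝ}
    (hab : ∀ s : S, a ≤ (s : ℝ) ∧ (s : ℝ) ≤ b)
    (μ ν : Measure S) [IsProbabilityMeasure μ] [IsProbabilityMeasure ν]
    {g : ℝ → ℝ} (hgm : Measurable g) (hg1 : ∀ t, |g t| ≤ 1) :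
    Integrable (fun t => g t * (cdfS ν t - cdfS μ t)) volume := by
  refine aux_integrable_of_bdd_support
    (hgm.mul ((cdfS_measurable ν).sub (cdfS_measurable μ))) (C := 2) (a := a) (b := b) ?_ ?_
  · intro t
    rw [abs_mul]
    calc |g t| * |cdfS ν t - cdfS μ t| ≤ 1 * 2 :=
        mul_le_mul (hg1 t) (cdf_diff_abs_le ν μ t) (abs_nonneg _) zero_le_one
      _ = 2 := one_mul 2
  · intro t ht
    rw [cdf_diff_zero hab ν μ ht, mul_zero]

lemma int_abs_cdf {S : Set ℝ} {a b : ℝ}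
    (hab : ∀ s : S, a ≤ (s : ℝ) ∧ (s : ℝ) ≤ b)
    (μ ν : Measure S) [IsProbabilityMeasure μ] [IsProbabilityMeasure ν] :
    Integrable (fun t => |cdfS μ t - cdfS ν t|) volume := by
  refine aux_integrable_of_bdd_support
    (((cdfS_measurable μ).sub (cdfS_measurable ν)).abs) (C := 2) (a := a) (b := b) ?_ ?_
  · intro t
    rw [abs_abs]; exact cdf_diff_abs_le μ ν t
  · intro t ht
    rw [cdf_diff_zero hab μ ν ht, abs_zero]

lemma upper_bound {S : Set ℝ} (hS : IsCompact S) {a b : ℝ}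
    (hab : ∀ s : S, a ≤ (s : ℝ) ∧ (s : ℝ) ≤ b) (hab' : a ≤ b)
    (μ ν : Measure S) [IsProbabilityMeasure μ] [IsProbabilityMeasure ν]
    {f : ℝ → ℝ} (hf : LipschitzWith 1 f) :
    (∫ s : S, f ↑s ∂μ) - (∫ s : S, f ↑s ∂ν) ≤ ∫ t, |cdfS μ t - cdfS ν t| := by
  set R := ∫ t, |cdfS μ t - cdfS ν t| with hR
  suffices H : ∀ h : ℝ, 0 < h →
      (∫ s : S, f ↑s ∂μ) - (∫ s : S, f ↑s ∂ν) ≤ R + 4 * h by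
    by_contra hcon
    push_neg at hcon
    have := H ((((∫ s : S, f ↑s ∂μ) - ∫ s : S, f ↑s ∂ν) - R) / 8) (by linarith)
    linarith
  intro h hh
  set g : ℝ → ℝ := fun t => (f (t + h) - f t) / h with hg
  have hgc : Continuous g :=
    ((hf.continuous.comp (continuous_add_right h)).sub hf.continuous).div_const h
  have hgm : Measurable g := hgc.measurable
  have hg1 : ∀ t, |g t| ≤ 1 := by
    intro t
    rw [hg]
    simp only
    rw [abs_div, abs_of_pos hh, div_le_one hh]
    have hd := hf.dist_le_mul (t + h) t
    rw [Real.dist_eq, Real.dist_eq] at hd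
    have : |t + h - t| = h := by rw [show t + h - t = h by ring, abs_of_pos hh]
    rw [this] at hd
    simpa using hd
  have hdk := diff_key hab hab' μ ν hgm hg1
  have hint1 := int_g_cdf hab μ ν hgm hg1
  have hint2 := int_abs_cdf hab μ ν
  have hbound : (∫ t, g t * (cdfS ν t - cdfS μ t)) ≤ R := by
    refine integral_mono hint1 hint2 fun t => ?_
    calc g t * (cdfS ν t - cdfS μ t) ≤ |g t * (cdfS ν t - cdfS μ t)| := le_abs_self _
      _ = |g t| * |cdfS ν t - cdfS μ t| := abs_mul _ _
      _ ≤ 1 * |cdfS ν t - cdfS μ t| :=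
        mul_le_mul_of_nonneg_right (hg1 t) (abs_nonneg _)
      _ = |cdfS μ t - cdfS ν t| := by rw [one_mul, abs_sub_comm]
  set φ : ℝ → ℝ := fun x => ∫ t in a..x, g t with hφ
  have hφlip : LipschitzWith 1 φ := lip_integral hgm hg1 a
  have hclose : ∀ s : S, |φ ↑s - (f ↑s - f a)| ≤ 2 * h := fun s => phi_close hf hh a ↑s
  have hkey : ∀ (κ : Measure S), IsProbabilityMeasure κ →
      |(∫ s : S, φ ↑s ∂κ) - ∫ s : S, (f ↑s - f a) ∂κ| ≤ 2 * h := by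
    intro κ hκ
    have hiφ : Integrable (fun s : S => φ ↑s) κ :=
      integrable_compact hS κ (hφlip.continuous.comp continuous_subtype_val)
    have hifa : Integrable (fun s : S => f ↑s - f a) κ :=
      integrable_compact hS κ ((hf.continuous.comp continuous_subtype_val).sub continuous_const)
    rw [← integral_sub hiφ hifa]
    calc |∫ s : S, (φ ↑s - (f ↑s - f a)) ∂κ|
        ≤ ∫ s : S, |φ ↑s - (f ↑s - f a)| ∂κ := by
          simpa [Real.norm_eq_abs] using
            MeasureTheory.norm_integral_le_integral_norm (μ := κ)
              (fun s : S => φ ↑s - (f ↑s - f a))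
      _ ≤ ∫ _s : S, (2 * h) ∂κ :=
        integral_mono (hiφ.sub hifa).abs (integrable_const _) (fun s => hclose s)
      _ = 2 * h := by simp
  have hkμ := hkey μ inferInstance
  have hkν := hkey ν inferInstance
  have hfμ : Integrable (fun s : S => f ↑s) μ :=
    integrable_compact hS μ (hf.continuous.comp continuous_subtype_val)
  have hfν : Integrable (fun s : S => f ↑s) ν :=
    integrable_compact hS ν (hf.continuous.comp continuous_subtype_val)
  have eμ : (∫ s : S, (f ↑s - f a) ∂μ) = (∫ s : S, f ↑s ∂μ) - f a := by
    rw [integral_sub hfμ (integrable_const _)]; simp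
  have eν : (∫ s : S, (f ↑s - f a) ∂ν) = (∫ s : S, f ↑s ∂ν) - f a := by
    rw [integral_sub hfν (integrable_const _)]; simp
  rw [eμ] at hkμ
  rw [eν] at hkν
  have hdkφ : (∫ s : S, φ ↑s ∂μ) - (∫ s : S, φ ↑s ∂ν)
      = ∫ t, g t * (cdfS ν t - cdfS μ t) := hdk
  rw [abs_le] at hkμ hkν
  linarith [hkμ.1, hkμ.2, hkν.1, hkν.2]

/-- For Borel probability measures `μ`, `ν` on a compact set `S ⊆ ℝ`, regarded as
probability measures on `ℝ`, the Monge–Kantorovich distance equals the `L¹` distance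
between the cumulative distribution functions `F_μ(x) = μ((-∞, x])`, `F_ν(x) = ν((-∞, x])`. -/
theorem dMK_eq_integral_abs_cdf_sub (S : Set ℝ) (hS : IsCompact S)
    (μ ν : Measure S) [IsProbabilityMeasure μ] [IsProbabilityMeasure ν] :
    dMK μ ν =
      ∫ x : ℝ, |((μ.map (Subtype.val : S → ℝ)) (Set.Iic x)).toReal -
        ((ν.map (Subtype.val : S → ℝ)) (Set.Iic x)).toReal| := by
  classical
  haveI hne : Nonempty S := by
    by_contra hne
    rw [not_nonempty_iff] at hne
    have h1 : (μ Set.univ) = 1 := measure_univ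
    rw [Set.univ_eq_empty_iff.mpr hne, measure_empty] at h1
    exact zero_ne_one h1
  set a := sInf S with ha
  set b := sSup S with hb
  have hab : ∀ s : S, a ≤ (s : ℝ) ∧ (s : ℝ) ≤ b := fun s =>
    ⟨csInf_le hS.bddBelow s.2, le_csSup hS.bddAbove s.2⟩
  have hab' : a ≤ b := by
    obtain ⟨s⟩ := hne
    exact le_trans (hab s).1 (hab s).2
  have hR : (∫ x : ℝ, |((μ.map (Subtype.val : S → ℝ)) (Set.Iic x)).toReal -
        ((ν.map (Subtype.val : S → ℝ)) (Set.Iic x)).toReal|)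
      = ∫ t, |cdfS μ t - cdfS ν t| := rfl
  rw [hR]
  -- the optimal Lipschitz function
  set g₀ : ℝ → ℝ := fun t => if cdfS ν t ≤ cdfS μ t then -1 else 1 with hg₀
  have hg₀m : Measurable g₀ :=
    Measurable.ite (measurableSet_le (cdfS_measurable ν) (cdfS_measurable μ))
      measurable_const measurable_const
  have hg₀1 : ∀ t, |g₀ t| ≤ 1 := by
    intro t
    rw [hg₀]
    simp only
    split <;> simp
  set f₀ : S → ℝ := fun s => ∫ t in a..(s : ℝ), g₀ t with hf₀
  have hf₀lip : LipschitzWith 1 f₀ := by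
    have := (lip_integral hg₀m hg₀1 a).comp (LipschitzWith.subtype_val (s := S))
    rw [mul_one] at this
    exact this
  have hval : (∫ s : S, f₀ s ∂μ) - (∫ s : S, f₀ s ∂ν) = ∫ t, |cdfS μ t - cdfS ν t| := by
    rw [show (∫ s : S, f₀ s ∂μ) - (∫ s : S, f₀ s ∂ν)
        = (∫ s : S, (∫ t in a..(s : ℝ), g₀ t) ∂μ) - ∫ s : S, (∫ t in a..(s : ℝ), g₀ t) ∂ν
        from rfl, diff_key hab hab' μ ν hg₀m hg₀1]
    refine integral_congr_ae (Filter.Eventually.of_forall fun t => ?_)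
    rw [hg₀]
    simp only
    by_cases hcase : cdfS ν t ≤ cdfS μ t
    · rw [if_pos hcase, abs_of_nonneg (by linarith : (0:ℝ) ≤ cdfS μ t - cdfS ν t)]
      ring
    · push_neg at hcase
      rw [if_neg (not_le.2 hcase), abs_of_neg (by linarith : cdfS μ t - cdfS ν t < 0)]
      ring
  -- upper bound for all elements of the set
  have hup : ∀ r ∈ {r : ℝ | ∃ f : S → ℝ, LipschitzWith 1 f ∧
      r = ∫ x, f x ∂μ - ∫ x, f x ∂ν}, r ≤ ∫ t, |cdfS μ t - cdfS ν t| := by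
    rintro r ⟨f, hf, rfl⟩
    -- extend f to a 1-Lipschitz function on ℝ
    set F : ℝ → ℝ := fun x => if hx : x ∈ S then f ⟨x, hx⟩ else 0 with hF
    have hFlip : LipschitzOnWith 1 F S := by
      rw [lipschitzOnWith_iff_dist_le_mul]
      intro x hx y hy
      rw [hF]
      simp only [dif_pos hx, dif_pos hy]
      have := hf.dist_le_mul ⟨x, hx⟩ ⟨y, hy⟩
      rwa [Subtype.dist_eq] at this
    obtain ⟨ft, hftlip, heq⟩ := hFlip.extend_real
    have hfs : ∀ s : S, f s = ft ↑s := by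
      intro s
      have h1 := heq s.2
      rw [hF] at h1
      simp only [dif_pos s.2, Subtype.coe_eta] at h1
      exact h1
    have h2 : (∫ x, f x ∂μ) = ∫ s : S, ft ↑s ∂μ :=
      integral_congr_ae (Filter.Eventually.of_forall fun s => hfs s)
    have h3 : (∫ x, f x ∂ν) = ∫ s : S, ft ↑s ∂ν :=
      integral_congr_ae (Filter.Eventually.of_forall fun s => hfs s)
    rw [h2, h3]
    exact upper_bound hS hab hab' μ ν hftlip
  rw [dMK]
  apply le_antisymm
  · exact csSup_le ⟨_, ⟨f₀, hf₀lip, hval.symm⟩⟩ hup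
  · exact le_csSup ⟨_, hup⟩ ⟨f₀, hf₀lip, hval.symm⟩
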